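/- arXiv:1212.6906 — 4 statements merged into one kernel-verified Lean document; each statement's English description precedes it below -/
import Mathlib

section
/- The third partial derivatives of the smooth max function satisfy ∂_j ∂_k ∂_l F_β(z) = β² q_{jkl}(z), where q_{jkl}(z) = π_j δ_{jl} δ_{jk} − π_j π_l δ_{jk} − π_j π_k (δ_{jl} + δ_{kl}) + 2 π_j π_k π_l evaluated at z, and ∑_{j,k,l=1}^p |q_{jkl}(z)| ≤ 6. -/
/-- The softmax weights `π_j(z) = exp(β z_j) / ∑_m exp(β z_m)`. -/
noncomputable def softmaxWeight (p : ℕ) (β : ℝ) (z : Fin p → ℝ) (j : Fin p) : ℝ :=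
  Real.exp (β * z j) / ∑ m, Real.exp (β * z m)

/-- Kronecker delta. -/
def kdelta {p : ℕ} (j k : Fin p) : ℝ := if j = k then 1 else 0

/-- `w_{jk}(z) = π_j(z) δ_{jk} − π_j(z) π_k(z)`. -/
noncomputable def softmaxHessian (p : ℕ) (β : ℝ) (z : Fin p → ℝ) (j k : Fin p) : ℝ :=
  softmaxWeight p β z j * kdelta j k - softmaxWeight p β z j * softmaxWeight p β z k

/-- `q_{jkl}(z) = π_j δ_{jl} δ_{jk} − π_j π_l δ_{jk} − π_j π_k (δ_{jl} + δ_{kl}) + 2 π_j π_k π_l`. -/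
noncomputable def softmaxThird (p : ℕ) (β : ℝ) (z : Fin p → ℝ) (j k l : Fin p) : ℝ :=
  softmaxWeight p β z j * kdelta j l * kdelta j k
    - softmaxWeight p β z j * softmaxWeight p β z l * kdelta j k
    - softmaxWeight p β z j * softmaxWeight p β z k * (kdelta j l + kdelta k l)
    + 2 * softmaxWeight p β z j * softmaxWeight p β z k * softmaxWeight p β z l

lemma aux_sum_exp_pos {p : ℕ} (hp : 0 < p) (β : ℝ) (z : Fin p → ℝ) :
    0 < ∑ m, Real.exp (β * z m) :=
  Finset.sum_pos (fun m _ => Real.exp_pos _) ⟨⟨0, hp⟩, Finset.mem_univ _⟩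

lemma aux_hasDerivAt_S {p : ℕ} (β : ℝ) (z : Fin p → ℝ) (l : Fin p) :
    HasDerivAt (fun s => ∑ m, Real.exp (β * Function.update z l s m))
      (β * Real.exp (β * z l)) (z l) := by
  have h : ∀ m ∈ Finset.univ, HasDerivAt
      (fun s => Real.exp (β * Function.update z l s m))
      (if m = l then β * Real.exp (β * z m) else 0) (z l) := by
    intro m _
    by_cases hm : m = l
    · subst hm
      simp only [Function.update_self, if_pos rfl]
      simpa [mul_comm] using (((hasDerivAt_id (z m)).const_mul β).exp)
    · simp only [Function.update_of_ne hm, if_neg hm]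
      exact hasDerivAt_const _ _
  have := HasDerivAt.fun_sum h
  simpa using this

lemma aux_hasDerivAt_weight {p : ℕ} (hp : 0 < p) (β : ℝ) (z : Fin p → ℝ) (j l : Fin p) :
    HasDerivAt (fun s => softmaxWeight p β (Function.update z l s) j)
      (β * softmaxWeight p β z j * (kdelta j l - softmaxWeight p β z l)) (z l) := by
  have hS : 0 < ∑ m, Real.exp (β * z m) := aux_sum_exp_pos hp β z
  have hnum : HasDerivAt (fun s => Real.exp (β * Function.update z l s j))
      (β * kdelta j l * Real.exp (β * z j)) (z l) := by
    by_cases hj : j = l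
    · subst hj
      simp only [Function.update_self, kdelta, if_pos rfl, mul_one]
      simpa [mul_comm] using (((hasDerivAt_id (z j)).const_mul β).exp)
    · simp only [Function.update_of_ne hj, kdelta, if_neg hj, mul_zero, zero_mul]
      exact hasDerivAt_const _ _
  have hden := aux_hasDerivAt_S β z l
  have h := hnum.fun_div hden (by
    have : (0:ℝ) < ∑ m, Real.exp (β * Function.update z l (z l) m) := by
      simpa [Function.update_eq_self] using hS
    simpa [Function.update_eq_self] using this.ne')
  have heq : (fun s => Real.exp (β * Function.update z l s j) /
      ∑ m, Real.exp (β * Function.update z l s m)) =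
      fun s => softmaxWeight p β (Function.update z l s) j := rfl
  rw [heq] at h
  simp only [Function.update_eq_self] at h
  refine h.congr_deriv ?_
  unfold softmaxWeight kdelta
  field_simp

lemma aux_weight_nonneg {p : ℕ} (β : ℝ) (z : Fin p → ℝ) (i : Fin p) :
    0 ≤ softmaxWeight p β z i :=
  div_nonneg (Real.exp_pos _).le (Finset.sum_nonneg fun m _ => (Real.exp_pos _).le)

lemma aux_kdelta_nonneg {p : ℕ} (a b : Fin p) : 0 ≤ kdelta a b := by
  unfold kdelta; split <;> norm_num

lemma aux_kdelta_sum {p : ℕ} (a : Fin p) : ∑ c, kdelta a c = 1 := by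
  simp [kdelta]

lemma aux_weight_sum {p : ℕ} (hp : 0 < p) (β : ℝ) (z : Fin p → ℝ) :
    ∑ i, softmaxWeight p β z i = 1 := by
  have hS : 0 < ∑ m, Real.exp (β * z m) := aux_sum_exp_pos hp β z
  unfold softmaxWeight
  rw [← Finset.sum_div, div_self hS.ne']

lemma aux_abs_third_le {p : ℕ} (β : ℝ) (z : Fin p → ℝ) (a b c : Fin p) :
    |softmaxThird p β z a b c| ≤
      softmaxWeight p β z a * kdelta a c * kdelta a b
        + softmaxWeight p β z a * softmaxWeight p β z c * kdelta a b
        + softmaxWeight p β z a * softmaxWeight p β z b * (kdelta a c + kdelta b c)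
        + 2 * softmaxWeight p β z a * softmaxWeight p β z b * softmaxWeight p β z c := by
  have key : ∀ x y u w : ℝ, 0 ≤ x → 0 ≤ y → 0 ≤ u → 0 ≤ w →
      |x - y - u + w| ≤ x + y + u + w := by
    intro x y u w hx hy hu hw
    rw [abs_le]; constructor <;> linarith
  unfold softmaxThird
  exact key _ _ _ _
    (mul_nonneg (mul_nonneg (aux_weight_nonneg β z a) (aux_kdelta_nonneg a c)) (aux_kdelta_nonneg a b))
    (mul_nonneg (mul_nonneg (aux_weight_nonneg β z a) (aux_weight_nonneg β z c)) (aux_kdelta_nonneg a b))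
    (mul_nonneg (mul_nonneg (aux_weight_nonneg β z a) (aux_weight_nonneg β z b))
      (add_nonneg (aux_kdelta_nonneg a c) (aux_kdelta_nonneg b c)))
    (mul_nonneg (mul_nonneg (mul_nonneg (by norm_num : (0:ℝ) ≤ 2) (aux_weight_nonneg β z a))
      (aux_weight_nonneg β z b)) (aux_weight_nonneg β z c))

/-- The third partial derivatives of the smooth max function satisfy
`∂_j ∂_k ∂_l F_β(z) = β² q_{jkl}(z)` (i.e. `∂_l (β w_{jk})(z) = β² q_{jkl}(z)`),
and `∑_{j,k,l} |q_{jkl}(z)| ≤ 6`. -/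
theorem smooth_max_third_derivative (p : ℕ) (hp : 0 < p) (β : ℝ) (hβ : 0 < β)
    (z : Fin p → ℝ) (j k l : Fin p) :
    HasDerivAt
      (fun s : ℝ => β * softmaxHessian p β (Function.update z l s) j k)
      (β ^ 2 * softmaxThird p β z j k l) (z l) ∧
    (∑ j', ∑ k', ∑ l', |softmaxThird p β z j' k' l'|) ≤ 6 := by
  constructor
  · have hj := aux_hasDerivAt_weight hp β z j l
    have hk := aux_hasDerivAt_weight hp β z k l
    have h := ((hj.mul_const (kdelta j k)).sub (hj.mul hk)).const_mul β
    simp only [Function.update_eq_self] at h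
    have hD : β * (β * softmaxWeight p β z j * (kdelta j l - softmaxWeight p β z l) * kdelta j k
        - (β * softmaxWeight p β z j * (kdelta j l - softmaxWeight p β z l) * softmaxWeight p β z k
          + softmaxWeight p β z j * (β * softmaxWeight p β z k * (kdelta k l - softmaxWeight p β z l))))
        = β ^ 2 * softmaxThird p β z j k l := by
      unfold softmaxThird; ring
    exact hD ▸ h
  · set π := softmaxWeight p β z with hπdef
    have hπ1 : ∑ i, π i = 1 := aux_weight_sum hp β z
    have hinner : ∀ a b : Fin p,
        ∑ c, (π a * kdelta a c * kdelta a b + π a * π c * kdelta a b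
          + π a * π b * (kdelta a c + kdelta b c) + 2 * π a * π b * π c)
        = 2 * π a * kdelta a b + 4 * (π a * π b) := by
      intro a b
      rw [Finset.sum_add_distrib, Finset.sum_add_distrib, Finset.sum_add_distrib]
      have e1 : ∑ c, π a * kdelta a c * kdelta a b = π a * kdelta a b := by
        simp [kdelta, mul_ite, ite_mul]
      have e2 : ∑ c, π a * π c * kdelta a b = π a * kdelta a b := by
        rw [← Finset.sum_mul, ← Finset.mul_sum, hπ1, mul_one]
      have e3 : ∑ c, π a * π b * (kdelta a c + kdelta b c) = π a * π b * 2 := by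
        rw [← Finset.mul_sum, Finset.sum_add_distrib, aux_kdelta_sum a, aux_kdelta_sum b]
        norm_num
      have e4 : ∑ c, 2 * π a * π b * π c = 2 * π a * π b := by
        rw [← Finset.mul_sum, hπ1, mul_one]
      rw [e1, e2, e3, e4]; ring
    calc ∑ j', ∑ k', ∑ l', |softmaxThird p β z j' k' l'|
        ≤ ∑ j', ∑ k', ∑ l', (π j' * kdelta j' l' * kdelta j' k' + π j' * π l' * kdelta j' k'
            + π j' * π k' * (kdelta j' l' + kdelta k' l') + 2 * π j' * π k' * π l') := by
          refine Finset.sum_le_sum fun a _ => Finset.sum_le_sum fun b _ =>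
            Finset.sum_le_sum fun c _ => ?_
          exact aux_abs_third_le β z a b c
      _ = ∑ j', ∑ k', (2 * π j' * kdelta j' k' + 4 * (π j' * π k')) := by
          refine Finset.sum_congr rfl fun a _ => Finset.sum_congr rfl fun b _ => ?_
          exact hinner a b
      _ = ∑ j', (6 * π j') := by
          refine Finset.sum_congr rfl fun a _ => ?_
          rw [Finset.sum_add_distrib]
          have e1 : ∑ b, 2 * π a * kdelta a b = 2 * π a := by
            rw [← Finset.mul_sum, aux_kdelta_sum a, mul_one]
          have e2 : ∑ b, 4 * (π a * π b) = 4 * π a := by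
            simp only [← mul_assoc]
            rw [← Finset.mul_sum, hπ1, mul_one]
          rw [e1, e2]; ring
      _ = 6 := by rw [← Finset.mul_sum, hπ1, mul_one]
end

section
/- Truncation impact on second moments: for every 1 ≤ j, k ≤ p, Ē[|x̃_{ij} x̃_{ik} − x_{ij} x_{ik}|] ≤ (3/2)(Ē[x_{ij}²] + Ē[x_{ik}²]) φ(u), where φ(u) ≥ 0 is any number such that Ē[x_{ij}² 1{|x_{ij}| > u (Ē[x_{ij}²])^{1/2}}] ≤ φ(u)² Ē[x_{ij}²] for all j. -/
open MeasureTheory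

/-- Average (over `i`) second moment `Ē[x_{ij}²] = n⁻¹ ∑_i E[x_{ij}²]`. -/
noncomputable def avgSecondMoment {Ω : Type*} [MeasurableSpace Ω] (μ : Measure Ω)
    (n p : ℕ) (x : Fin n → Fin p → Ω → ℝ) (j : Fin p) : ℝ :=
  (n : ℝ)⁻¹ * ∑ i, ∫ ω, (x i j ω) ^ 2 ∂μ

/-- The truncated variable
`x̃_{ij} = x_{ij} 1{|x_{ij}| ≤ u (Ē[x_{ij}²])^{1/2}} − E[x_{ij} 1{|x_{ij}| ≤ u (Ē[x_{ij}²])^{1/2}}]`. -/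
noncomputable def truncVar {Ω : Type*} [MeasurableSpace Ω] (μ : Measure Ω)
    (n p : ℕ) (x : Fin n → Fin p → Ω → ℝ) (u : ℝ) (i : Fin n) (j : Fin p)
    (ω : Ω) : ℝ :=
  (if |x i j ω| ≤ u * Real.sqrt (avgSecondMoment μ n p x j) then x i j ω else 0) -
    ∫ ω', (if |x i j ω'| ≤ u * Real.sqrt (avgSecondMoment μ n p x j)
      then x i j ω' else 0) ∂μ



lemma integral_abs_mul_le_sqrt {Ω : Type*} [MeasurableSpace Ω] (μ : Measure Ω)
    [IsProbabilityMeasure μ] {f g : Ω → ℝ}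
    (hf2 : Integrable (fun ω => f ω ^ 2) μ) (hg2 : Integrable (fun ω => g ω ^ 2) μ)
    (hfg : Integrable (fun ω => f ω * g ω) μ) :
    ∫ ω, |f ω * g ω| ∂μ ≤ Real.sqrt (∫ ω, f ω ^ 2 ∂μ) * Real.sqrt (∫ ω, g ω ^ 2 ∂μ) := by
  set A := ∫ ω, f ω ^ 2 ∂μ with hA
  set B := ∫ ω, g ω ^ 2 ∂μ with hB
  have hA0 : 0 ≤ A := integral_nonneg fun ω => sq_nonneg _
  have hB0 : 0 ≤ B := integral_nonneg fun ω => sq_nonneg _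
  by_cases hAz : A = 0
  · have hf0 : (fun ω => f ω ^ 2) =ᵐ[μ] 0 := by
      rw [← integral_eq_zero_iff_of_nonneg (fun ω => sq_nonneg _) hf2]
      exact hAz
    have h0 : (fun ω => |f ω * g ω|) =ᵐ[μ] 0 := by
      filter_upwards [hf0] with ω hω
      have : f ω = 0 := by
        have : f ω ^ 2 = 0 := hω
        exact pow_eq_zero_iff (n := 2) (by norm_num) |>.mp this
      simp [this]
    rw [integral_congr_ae h0]
    simp
    positivity
  by_cases hBz : B = 0
  · have hg0 : (fun ω => g ω ^ 2) =ᵐ[μ] 0 := by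
      rw [← integral_eq_zero_iff_of_nonneg (fun ω => sq_nonneg _) hg2]
      exact hBz
    have h0 : (fun ω => |f ω * g ω|) =ᵐ[μ] 0 := by
      filter_upwards [hg0] with ω hω
      have : g ω = 0 := by
        have : g ω ^ 2 = 0 := hω
        exact pow_eq_zero_iff (n := 2) (by norm_num) |>.mp this
      simp [this]
    rw [integral_congr_ae h0]
    simp
    positivity
  have hApos : 0 < A := lt_of_le_of_ne hA0 (Ne.symm hAz)
  have hBpos : 0 < B := lt_of_le_of_ne hB0 (Ne.symm hBz)
  have hsA : Real.sqrt A ^ 2 = A := Real.sq_sqrt hA0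
  have hsB : Real.sqrt B ^ 2 = B := Real.sq_sqrt hB0
  have hsApos : 0 < Real.sqrt A := Real.sqrt_pos.2 hApos
  have hsBpos : 0 < Real.sqrt B := Real.sqrt_pos.2 hBpos
  have key : ∀ ω, 2 * (Real.sqrt A * Real.sqrt B) * |f ω * g ω| ≤ B * f ω ^ 2 + A * g ω ^ 2 := by
    intro ω
    rw [abs_mul]
    nlinarith [sq_nonneg (Real.sqrt B * |f ω| - Real.sqrt A * |g ω|), sq_abs (f ω), sq_abs (g ω),
      abs_nonneg (f ω), abs_nonneg (g ω)]
  have h2 : ∫ ω, 2 * (Real.sqrt A * Real.sqrt B) * |f ω * g ω| ∂μ ≤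
      ∫ ω, (B * f ω ^ 2 + A * g ω ^ 2) ∂μ :=
    integral_mono (hfg.abs.const_mul _) ((hf2.const_mul B).add (hg2.const_mul A)) key
  rw [integral_const_mul, integral_add (hf2.const_mul B) (hg2.const_mul A),
    integral_const_mul, integral_const_mul] at h2
  nlinarith [h2, mul_pos hsApos hsBpos]

lemma integral_abs_le_sqrt {Ω : Type*} [MeasurableSpace Ω] (μ : Measure Ω)
    [IsProbabilityMeasure μ] {f : Ω → ℝ}
    (hfi : Integrable f μ) (hf2 : Integrable (fun ω => f ω ^ 2) μ) :
    ∫ ω, |f ω| ∂μ ≤ Real.sqrt (∫ ω, f ω ^ 2 ∂μ) := by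
  have h := integral_abs_mul_le_sqrt μ (g := fun _ => (1 : ℝ)) hf2
    (by simpa using (integrable_const (1:ℝ))) (by simpa using hfi)
  simpa using h

lemma avg_sqrt_CS {n : ℕ} (c d : Fin n → ℝ) (hc : ∀ i, 0 ≤ c i) (hd : ∀ i, 0 ≤ d i) :
    (n : ℝ)⁻¹ * ∑ i, Real.sqrt (c i) * Real.sqrt (d i) ≤
      Real.sqrt ((n : ℝ)⁻¹ * ∑ i, c i) * Real.sqrt ((n : ℝ)⁻¹ * ∑ i, d i) := by
  have h := Real.sum_sqrt_mul_sqrt_le Finset.univ hc hd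
  have hn : (0:ℝ) ≤ (n : ℝ)⁻¹ := by positivity
  calc (n : ℝ)⁻¹ * ∑ i, Real.sqrt (c i) * Real.sqrt (d i)
      ≤ (n : ℝ)⁻¹ * (Real.sqrt (∑ i, c i) * Real.sqrt (∑ i, d i)) :=
        mul_le_mul_of_nonneg_left h hn
    _ = Real.sqrt ((n : ℝ)⁻¹ * ∑ i, c i) * Real.sqrt ((n : ℝ)⁻¹ * ∑ i, d i) := by
        rw [Real.sqrt_mul hn, Real.sqrt_mul hn]
        have h2 := Real.mul_self_sqrt hn
        linear_combination (-(Real.sqrt (∑ i, c i) * Real.sqrt (∑ i, d i))) * h2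


lemma key_scalar {a b φ : ℝ} (ha0 : 0 ≤ a) (hb0 : 0 ≤ b) (ha1 : a ≤ 1) (hb1 : b ≤ 1)
    (haφ : a ≤ φ) (hbφ : b ≤ φ) :
    a ^ 2 + b ^ 2 + a * Real.sqrt (1 - b ^ 2) + b * Real.sqrt (1 - a ^ 2) ≤ 3 * φ := by
  have hb2 : 0 ≤ 1 - b ^ 2 := by nlinarith
  have ha2 : 0 ≤ 1 - a ^ 2 := by nlinarith
  have h1b : Real.sqrt (1 - b ^ 2) ≤ 1 := Real.sqrt_le_one.mpr (by nlinarith)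
  have h1a : Real.sqrt (1 - a ^ 2) ≤ 1 := Real.sqrt_le_one.mpr (by nlinarith)
  have hsb : Real.sqrt (1 - b ^ 2) ^ 2 = 1 - b ^ 2 := Real.sq_sqrt hb2
  have hsa : Real.sqrt (1 - a ^ 2) ^ 2 = 1 - a ^ 2 := Real.sq_sqrt ha2
  have hnb : 0 ≤ Real.sqrt (1 - b ^ 2) := Real.sqrt_nonneg _
  have hna : 0 ≤ Real.sqrt (1 - a ^ 2) := Real.sqrt_nonneg _
  rcases le_total (max a b) (1 / 2) with hm | hm
  · have hah : a ≤ 1 / 2 := le_trans (le_max_left a b) hm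
    have hbh : b ≤ 1 / 2 := le_trans (le_max_right a b) hm
    have e1 : a * Real.sqrt (1 - b ^ 2) ≤ a := mul_le_of_le_one_right ha0 h1b
    have e2 : b * Real.sqrt (1 - a ^ 2) ≤ b := mul_le_of_le_one_right hb0 h1a
    nlinarith [mul_le_mul_of_nonneg_left hah ha0, mul_le_mul_of_nonneg_left hbh hb0]
  · set m := max a b with hmdef
    have ham : a ≤ m := le_max_left a b
    have hbm : b ≤ m := le_max_right a b
    have hm1 : m ≤ 1 := max_le ha1 hb1
    have hmφ : m ≤ φ := max_le haφ hbφ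
    have hm0 : 0 ≤ m := le_trans ha0 ham
    have e1 : a * Real.sqrt (1 - b ^ 2) ≤ (a ^ 2 + (1 - b ^ 2)) / 2 := by
      nlinarith [sq_nonneg (a - Real.sqrt (1 - b ^ 2))]
    have e2 : b * Real.sqrt (1 - a ^ 2) ≤ (b ^ 2 + (1 - a ^ 2)) / 2 := by
      nlinarith [sq_nonneg (b - Real.sqrt (1 - a ^ 2))]
    have key : 2 * m ^ 2 + 1 ≤ 3 * m := by nlinarith
    nlinarith [mul_le_mul_of_nonneg_left ham ha0, mul_le_mul_of_nonneg_left hbm hb0,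
      mul_le_mul ham ham ha0 hm0, mul_le_mul hbm hbm hb0 hm0]

lemma final_amgm {σj σk φ : ℝ} (hσj : 0 ≤ σj) (hσk : 0 ≤ σk) (hφ : 0 ≤ φ) :
    3 * φ * (Real.sqrt σj * Real.sqrt σk) ≤ 3 / 2 * (σj + σk) * φ := by
  have h1 := Real.sq_sqrt hσj
  have h2 := Real.sq_sqrt hσk
  have h3 := sq_nonneg (Real.sqrt σj - Real.sqrt σk)
  have key : Real.sqrt σj * Real.sqrt σk * 2 ≤ σj + σk := by nlinarith
  nlinarith [mul_le_mul_of_nonneg_left key hφ]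

set_option maxHeartbeats 1600000 in
lemma trunc_per_i {Ω : Type*} [MeasurableSpace Ω] (μ : Measure Ω) [IsProbabilityMeasure μ]
    (f g : Ω → ℝ) (hfm : Measurable f) (hgm : Measurable g)
    (hfi : Integrable f μ) (hgi : Integrable g μ)
    (hf2 : Integrable (fun ω => f ω ^ 2) μ) (hg2 : Integrable (fun ω => g ω ^ 2) μ)
    (hfg : Integrable (fun ω => f ω * g ω) μ)
    (hfc : ∫ ω, f ω ∂μ = 0) (hgc : ∫ ω, g ω ∂μ = 0)
    (s t : ℝ) (hs : 0 < s) (ht : 0 < t) :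
    ∫ ω, |((if |f ω| ≤ s then f ω else 0) - ∫ ω', (if |f ω'| ≤ s then f ω' else 0) ∂μ) *
          ((if |g ω| ≤ t then g ω else 0) - ∫ ω', (if |g ω'| ≤ t then g ω' else 0) ∂μ) -
          f ω * g ω| ∂μ ≤
      Real.sqrt ((∫ ω, (if |f ω| ≤ s then 0 else f ω) ^ 2 ∂μ) +
          s ^ 2 / t ^ 2 * ∫ ω, (if |g ω| ≤ t then 0 else g ω) ^ 2 ∂μ) *
        Real.sqrt ((∫ ω, (if |g ω| ≤ t then 0 else g ω) ^ 2 ∂μ) +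
          t ^ 2 / s ^ 2 * ∫ ω, (if |f ω| ≤ s then 0 else f ω) ^ 2 ∂μ) +
      Real.sqrt (∫ ω, (if |f ω| ≤ s then 0 else f ω) ^ 2 ∂μ) *
        Real.sqrt ((∫ ω, g ω ^ 2 ∂μ) - ∫ ω, (if |g ω| ≤ t then 0 else g ω) ^ 2 ∂μ) +
      Real.sqrt (∫ ω, (if |g ω| ≤ t then 0 else g ω) ^ 2 ∂μ) *
        Real.sqrt ((∫ ω, f ω ^ 2 ∂μ) - ∫ ω, (if |f ω| ≤ s then 0 else f ω) ^ 2 ∂μ) := by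
  classical
  set Yf : Ω → ℝ := fun ω => if |f ω| ≤ s then f ω else 0 with hYf
  set Yg : Ω → ℝ := fun ω => if |g ω| ≤ t then g ω else 0 with hYg
  set Zf : Ω → ℝ := fun ω => if |f ω| ≤ s then 0 else f ω with hZf
  set Zg : Ω → ℝ := fun ω => if |g ω| ≤ t then 0 else g ω with hZg
  set Wf : Ω → ℝ := fun ω => if |f ω| ≤ s ∧ |g ω| ≤ t then 0 else f ω with hWf
  set Wg : Ω → ℝ := fun ω => if |f ω| ≤ s ∧ |g ω| ≤ t then 0 else g ω with hWg
  -- measurability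
  have hSf : MeasurableSet {ω | |f ω| ≤ s} := measurableSet_le hfm.abs measurable_const
  have hSg : MeasurableSet {ω | |g ω| ≤ t} := measurableSet_le hgm.abs measurable_const
  have hYfm : Measurable Yf := Measurable.ite hSf hfm measurable_const
  have hYgm : Measurable Yg := Measurable.ite hSg hgm measurable_const
  have hZfm : Measurable Zf := Measurable.ite hSf measurable_const hfm
  have hZgm : Measurable Zg := Measurable.ite hSg measurable_const hgm
  have hSfg : MeasurableSet {ω | |f ω| ≤ s ∧ |g ω| ≤ t} := hSf.inter hSg
  have hWfm : Measurable Wf := Measurable.ite hSfg measurable_const hfm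
  have hWgm : Measurable Wg := Measurable.ite hSfg measurable_const hgm
  -- pointwise domination
  have hYfb : ∀ ω, |Yf ω| ≤ |f ω| := by intro ω; simp only [hYf]; split_ifs <;> simp [abs_nonneg]
  have hYgb : ∀ ω, |Yg ω| ≤ |g ω| := by intro ω; simp only [hYg]; split_ifs <;> simp [abs_nonneg]
  have hZfb : ∀ ω, |Zf ω| ≤ |f ω| := by intro ω; simp only [hZf]; split_ifs <;> simp [abs_nonneg]
  have hZgb : ∀ ω, |Zg ω| ≤ |g ω| := by intro ω; simp only [hZg]; split_ifs <;> simp [abs_nonneg]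
  have hWfb : ∀ ω, |Wf ω| ≤ |f ω| := by intro ω; simp only [hWf]; split_ifs <;> simp [abs_nonneg]
  have hWgb : ∀ ω, |Wg ω| ≤ |g ω| := by intro ω; simp only [hWg]; split_ifs <;> simp [abs_nonneg]
  -- integrabilities
  have hYfi : Integrable Yf μ := hfi.abs.mono' hYfm.aestronglyMeasurable
    (Filter.Eventually.of_forall fun ω => by simpa using hYfb ω)
  have hYgi : Integrable Yg μ := hgi.abs.mono' hYgm.aestronglyMeasurable
    (Filter.Eventually.of_forall fun ω => by simpa using hYgb ω)
  have hZfi : Integrable Zf μ := hfi.abs.mono' hZfm.aestronglyMeasurable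
    (Filter.Eventually.of_forall fun ω => by simpa using hZfb ω)
  have hZgi : Integrable Zg μ := hgi.abs.mono' hZgm.aestronglyMeasurable
    (Filter.Eventually.of_forall fun ω => by simpa using hZgb ω)
  have sqb : ∀ (h1 h2 : Ω → ℝ), (∀ ω, |h1 ω| ≤ |h2 ω|) → ∀ ω, ‖h1 ω ^ 2‖ ≤ h2 ω ^ 2 := by
    intro h1 h2 hb ω
    have := hb ω
    rw [Real.norm_eq_abs, abs_pow]
    calc |h1 ω| ^ 2 ≤ |h2 ω| ^ 2 := by nlinarith [abs_nonneg (h1 ω)]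
      _ = h2 ω ^ 2 := sq_abs _
  have hYf2 : Integrable (fun ω => Yf ω ^ 2) μ := hf2.mono' (hYfm.pow_const 2).aestronglyMeasurable
    (Filter.Eventually.of_forall (sqb Yf f hYfb))
  have hYg2 : Integrable (fun ω => Yg ω ^ 2) μ := hg2.mono' (hYgm.pow_const 2).aestronglyMeasurable
    (Filter.Eventually.of_forall (sqb Yg g hYgb))
  have hZf2 : Integrable (fun ω => Zf ω ^ 2) μ := hf2.mono' (hZfm.pow_const 2).aestronglyMeasurable
    (Filter.Eventually.of_forall (sqb Zf f hZfb))
  have hZg2 : Integrable (fun ω => Zg ω ^ 2) μ := hg2.mono' (hZgm.pow_const 2).aestronglyMeasurable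
    (Filter.Eventually.of_forall (sqb Zg g hZgb))
  have hWf2 : Integrable (fun ω => Wf ω ^ 2) μ := hf2.mono' (hWfm.pow_const 2).aestronglyMeasurable
    (Filter.Eventually.of_forall (sqb Wf f hWfb))
  have hWg2 : Integrable (fun ω => Wg ω ^ 2) μ := hg2.mono' (hWgm.pow_const 2).aestronglyMeasurable
    (Filter.Eventually.of_forall (sqb Wg g hWgb))
  have prodb : ∀ (h1 h2 : Ω → ℝ), (∀ ω, |h1 ω| ≤ |f ω|) → (∀ ω, |h2 ω| ≤ |g ω|) →
      ∀ ω, ‖h1 ω * h2 ω‖ ≤ |f ω * g ω| := by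
    intro h1 h2 hb1 hb2 ω
    rw [Real.norm_eq_abs, abs_mul, abs_mul]
    exact mul_le_mul (hb1 ω) (hb2 ω) (abs_nonneg _) (abs_nonneg _)
  have hWfWg : Integrable (fun ω => Wf ω * Wg ω) μ := hfg.abs.mono'
    (hWfm.mul hWgm).aestronglyMeasurable (Filter.Eventually.of_forall (prodb Wf Wg hWfb hWgb))
  have hYfYg : Integrable (fun ω => Yf ω * Yg ω) μ := hfg.abs.mono'
    (hYfm.mul hYgm).aestronglyMeasurable (Filter.Eventually.of_forall (prodb Yf Yg hYfb hYgb))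
  set mf : ℝ := ∫ ω, Yf ω ∂μ with hmf
  set mg : ℝ := ∫ ω, Yg ω ∂μ with hmg
  set Af : ℝ := ∫ ω, Zf ω ^ 2 ∂μ with hAf
  set Ag : ℝ := ∫ ω, Zg ω ^ 2 ∂μ with hAg
  set Bf : ℝ := ∫ ω, f ω ^ 2 ∂μ with hBf
  set Bg : ℝ := ∫ ω, g ω ^ 2 ∂μ with hBg
  -- key pointwise identity
  have hprod : ∀ ω, Yf ω * Yg ω - f ω * g ω = -(Wf ω * Wg ω) := by
    intro ω
    simp only [hYf, hYg, hWf, hWg]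
    by_cases h1 : |f ω| ≤ s <;> by_cases h2 : |g ω| ≤ t <;> simp [h1, h2] <;> ring
  have hid : ∀ ω, (Yf ω - mf) * (Yg ω - mg) - f ω * g ω =
      -(Wf ω * Wg ω) + (-(mf * (Yg ω - mg))) + (-(mg * Yf ω)) := by
    intro ω
    have := hprod ω
    nlinarith [this]
  have habs : ∀ ω, |(Yf ω - mf) * (Yg ω - mg) - f ω * g ω| ≤
      |Wf ω * Wg ω| + |mf| * |Yg ω - mg| + |mg| * |Yf ω| := by
    intro ω
    rw [hid ω]
    calc |(-(Wf ω * Wg ω)) + (-(mf * (Yg ω - mg))) + (-(mg * Yf ω))|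
        ≤ |(-(Wf ω * Wg ω)) + (-(mf * (Yg ω - mg)))| + |(-(mg * Yf ω))| := abs_add_le _ _
      _ ≤ |(-(Wf ω * Wg ω))| + |(-(mf * (Yg ω - mg)))| + |(-(mg * Yf ω))| := by
          gcongr; exact abs_add_le _ _
      _ = |Wf ω * Wg ω| + |mf| * |Yg ω - mg| + |mg| * |Yf ω| := by
          simp [abs_neg, abs_mul]
  -- integrability of both sides
  have hLHSi : Integrable (fun ω => (Yf ω - mf) * (Yg ω - mg) - f ω * g ω) μ := by
    have : (fun ω => (Yf ω - mf) * (Yg ω - mg) - f ω * g ω) =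
        (fun ω => Yf ω * Yg ω - mf * Yg ω - mg * Yf ω + mf * mg - f ω * g ω) := by
      funext ω; ring
    rw [this]
    exact ((((hYfYg.sub (hYgi.const_mul mf)).sub (hYfi.const_mul mg)).add
      (integrable_const _)).sub hfg)
  have hYgmi : Integrable (fun ω => Yg ω - mg) μ := hYgi.sub (integrable_const _)
  have hRHSi : Integrable (fun ω => |Wf ω * Wg ω| + |mf| * |Yg ω - mg| + |mg| * |Yf ω|) μ :=
    (hWfWg.abs.add ((hYgmi.abs).const_mul _)).add ((hYfi.abs).const_mul _)
  have hI1 : Integrable (fun ω => |Wf ω * Wg ω| + |mf| * |Yg ω - mg|) μ := by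
    exact hWfWg.abs.add ((hYgmi.abs).const_mul _)
  have hI2 : Integrable (fun ω => |mg| * |Yf ω|) μ := by
    exact (hYfi.abs).const_mul _
  have hI3 : Integrable (fun ω => |Wf ω * Wg ω|) μ := hWfWg.abs
  have hI4 : Integrable (fun ω => |mf| * |Yg ω - mg|) μ := by
    exact (hYgmi.abs).const_mul _
  have hmono : ∫ ω, |(Yf ω - mf) * (Yg ω - mg) - f ω * g ω| ∂μ ≤
      ∫ ω, (|Wf ω * Wg ω| + |mf| * |Yg ω - mg| + |mg| * |Yf ω|) ∂μ :=
    integral_mono hLHSi.abs hRHSi habs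
  rw [integral_add hI1 hI2, integral_add hI3 hI4, integral_const_mul, integral_const_mul]
    at hmono
  -- bound term 1
  have hWfsq : ∫ ω, Wf ω ^ 2 ∂μ ≤ Af + s ^ 2 / t ^ 2 * Ag := by
    have hpt : ∀ ω, Wf ω ^ 2 ≤ Zf ω ^ 2 + s ^ 2 / t ^ 2 * Zg ω ^ 2 := by
      intro ω
      have hdiv : (0:ℝ) ≤ s ^ 2 / t ^ 2 := by positivity
      simp only [hWf, hZf, hZg]
      by_cases h1 : |f ω| ≤ s
      · by_cases h2 : |g ω| ≤ t
        · rw [if_pos (And.intro h1 h2), if_pos h1, if_pos h2]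
          norm_num
        · rw [if_neg (fun h => h2 h.2), if_pos h1, if_neg h2]
          have hf2' : f ω ^ 2 ≤ s ^ 2 := by nlinarith [sq_abs (f ω), abs_nonneg (f ω)]
          have hg2' : t ^ 2 ≤ g ω ^ 2 := by
            push_neg at h2
            nlinarith [sq_abs (g ω), abs_nonneg (g ω)]
          have h3 : s ^ 2 / t ^ 2 * t ^ 2 ≤ s ^ 2 / t ^ 2 * g ω ^ 2 :=
            mul_le_mul_of_nonneg_left hg2' hdiv
          have h4 : s ^ 2 / t ^ 2 * t ^ 2 = s ^ 2 := by field_simp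
          nlinarith [sq_nonneg (f ω)]
      · rw [if_neg (fun h => h1 h.1), if_neg h1]
        nlinarith [mul_nonneg hdiv (sq_nonneg (if |g ω| ≤ t then (0:ℝ) else g ω))]
    calc ∫ ω, Wf ω ^ 2 ∂μ ≤ ∫ ω, (Zf ω ^ 2 + s ^ 2 / t ^ 2 * Zg ω ^ 2) ∂μ :=
          integral_mono hWf2 (hZf2.add (hZg2.const_mul _)) hpt
      _ = Af + s ^ 2 / t ^ 2 * Ag := by
          rw [integral_add hZf2 (hZg2.const_mul _), integral_const_mul]
  have hWgsq : ∫ ω, Wg ω ^ 2 ∂μ ≤ Ag + t ^ 2 / s ^ 2 * Af := by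
    have hpt : ∀ ω, Wg ω ^ 2 ≤ Zg ω ^ 2 + t ^ 2 / s ^ 2 * Zf ω ^ 2 := by
      intro ω
      have hdiv : (0:ℝ) ≤ t ^ 2 / s ^ 2 := by positivity
      simp only [hWg, hZf, hZg]
      by_cases h2 : |g ω| ≤ t
      · by_cases h1 : |f ω| ≤ s
        · rw [if_pos (And.intro h1 h2), if_pos h1, if_pos h2]
          norm_num
        · rw [if_neg (fun h => h1 h.1), if_neg h1, if_pos h2]
          have hg2' : g ω ^ 2 ≤ t ^ 2 := by nlinarith [sq_abs (g ω), abs_nonneg (g ω)]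
          have hf2' : s ^ 2 ≤ f ω ^ 2 := by
            push_neg at h1
            nlinarith [sq_abs (f ω), abs_nonneg (f ω)]
          have h3 : t ^ 2 / s ^ 2 * s ^ 2 ≤ t ^ 2 / s ^ 2 * f ω ^ 2 :=
            mul_le_mul_of_nonneg_left hf2' hdiv
          have h4 : t ^ 2 / s ^ 2 * s ^ 2 = t ^ 2 := by field_simp
          nlinarith [sq_nonneg (g ω)]
      · rw [if_neg (fun h => h2 h.2), if_neg h2]
        nlinarith [mul_nonneg hdiv (sq_nonneg (if |f ω| ≤ s then (0:ℝ) else f ω))]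
    calc ∫ ω, Wg ω ^ 2 ∂μ ≤ ∫ ω, (Zg ω ^ 2 + t ^ 2 / s ^ 2 * Zf ω ^ 2) ∂μ :=
          integral_mono hWg2 (hZg2.add (hZf2.const_mul _)) hpt
      _ = Ag + t ^ 2 / s ^ 2 * Af := by
          rw [integral_add hZg2 (hZf2.const_mul _), integral_const_mul]
  have hterm1 : ∫ ω, |Wf ω * Wg ω| ∂μ ≤
      Real.sqrt (Af + s ^ 2 / t ^ 2 * Ag) * Real.sqrt (Ag + t ^ 2 / s ^ 2 * Af) := by
    calc ∫ ω, |Wf ω * Wg ω| ∂μ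
        ≤ Real.sqrt (∫ ω, Wf ω ^ 2 ∂μ) * Real.sqrt (∫ ω, Wg ω ^ 2 ∂μ) :=
          integral_abs_mul_le_sqrt μ hWf2 hWg2 hWfWg
      _ ≤ Real.sqrt (Af + s ^ 2 / t ^ 2 * Ag) * Real.sqrt (Ag + t ^ 2 / s ^ 2 * Af) := by
          exact mul_le_mul (Real.sqrt_le_sqrt hWfsq) (Real.sqrt_le_sqrt hWgsq)
            (Real.sqrt_nonneg _) (Real.sqrt_nonneg _)
  -- bound |mf| ≤ √Af, |mg| ≤ √Ag
  have hmfb : |mf| ≤ Real.sqrt Af := by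
    have hsum : ∀ ω, Yf ω + Zf ω = f ω := by
      intro ω; simp only [hYf, hZf]; split_ifs <;> ring
    have : mf + ∫ ω, Zf ω ∂μ = 0 := by
      rw [hmf, ← integral_add hYfi hZfi]
      simp only [hsum]
      exact hfc
    have hmfe : mf = -∫ ω, Zf ω ∂μ := by linarith
    rw [hmfe, abs_neg]
    calc |∫ ω, Zf ω ∂μ| ≤ ∫ ω, |Zf ω| ∂μ := by
          simpa using norm_integral_le_integral_norm (μ := μ) Zf
      _ ≤ Real.sqrt Af := by rw [hAf]; exact integral_abs_le_sqrt μ hZfi hZf2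
  have hmgb : |mg| ≤ Real.sqrt Ag := by
    have hsum : ∀ ω, Yg ω + Zg ω = g ω := by
      intro ω; simp only [hYg, hZg]; split_ifs <;> ring
    have : mg + ∫ ω, Zg ω ∂μ = 0 := by
      rw [hmg, ← integral_add hYgi hZgi]
      simp only [hsum]
      exact hgc
    have hmge : mg = -∫ ω, Zg ω ∂μ := by linarith
    rw [hmge, abs_neg]
    calc |∫ ω, Zg ω ∂μ| ≤ ∫ ω, |Zg ω| ∂μ := by
          simpa using norm_integral_le_integral_norm (μ := μ) Zg
      _ ≤ Real.sqrt Ag := by rw [hAg]; exact integral_abs_le_sqrt μ hZgi hZg2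
  -- ∫ Yf² = Bf − Af, ∫ Yg² = Bg − Ag
  have hYfsq : ∫ ω, Yf ω ^ 2 ∂μ = Bf - Af := by
    have hsum : ∀ ω, Yf ω ^ 2 + Zf ω ^ 2 = f ω ^ 2 := by
      intro ω; simp only [hYf, hZf]; split_ifs <;> ring
    have : (∫ ω, Yf ω ^ 2 ∂μ) + Af = Bf := by
      rw [hAf, ← integral_add hYf2 hZf2]
      simp only [hsum, hBf]
    linarith
  have hYgsq : ∫ ω, Yg ω ^ 2 ∂μ = Bg - Ag := by
    have hsum : ∀ ω, Yg ω ^ 2 + Zg ω ^ 2 = g ω ^ 2 := by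
      intro ω; simp only [hYg, hZg]; split_ifs <;> ring
    have : (∫ ω, Yg ω ^ 2 ∂μ) + Ag = Bg := by
      rw [hAg, ← integral_add hYg2 hZg2]
      simp only [hsum, hBg]
    linarith
  -- ∫ |Yg − mg| ≤ √(Bg − Ag)
  have hYgm2 : Integrable (fun ω => (Yg ω - mg) ^ 2) μ := by
    have : (fun ω => (Yg ω - mg) ^ 2) = (fun ω => Yg ω ^ 2 - (2 * mg) * Yg ω + mg ^ 2) := by
      funext ω; ring
    rw [this]
    exact (hYg2.sub (hYgi.const_mul _)).add (integrable_const _)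
  have hYgmsq : ∫ ω, (Yg ω - mg) ^ 2 ∂μ ≤ Bg - Ag := by
    have hIb : Integrable (fun ω => 2 * mg * Yg ω) μ := by exact hYgi.const_mul _
    have hIa : Integrable (fun ω => Yg ω ^ 2 - 2 * mg * Yg ω) μ := by exact hYg2.sub hIb
    have hint : ∫ ω, (Yg ω - mg) ^ 2 ∂μ = (∫ ω, Yg ω ^ 2 ∂μ) - 2 * mg * mg + mg ^ 2 := by
      have he : (fun ω => (Yg ω - mg) ^ 2) = (fun ω => Yg ω ^ 2 - 2 * mg * Yg ω + mg ^ 2) := by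
        funext ω; ring
      rw [he, integral_add hIa (integrable_const _), integral_sub hYg2 hIb, integral_const_mul,
        integral_const]
      simp [measure_univ]
      exact Or.inl rfl
    rw [hint, hYgsq]
    nlinarith [sq_nonneg mg]
  have hterm2b : ∫ ω, |Yg ω - mg| ∂μ ≤ Real.sqrt (Bg - Ag) := by
    calc ∫ ω, |Yg ω - mg| ∂μ ≤ Real.sqrt (∫ ω, (Yg ω - mg) ^ 2 ∂μ) :=
          integral_abs_le_sqrt μ hYgmi hYgm2
      _ ≤ Real.sqrt (Bg - Ag) := Real.sqrt_le_sqrt hYgmsq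
  have hterm3b : ∫ ω, |Yf ω| ∂μ ≤ Real.sqrt (Bf - Af) := by
    calc ∫ ω, |Yf ω| ∂μ ≤ Real.sqrt (∫ ω, Yf ω ^ 2 ∂μ) := integral_abs_le_sqrt μ hYfi hYf2
      _ = Real.sqrt (Bf - Af) := by rw [hYfsq]
  -- assemble
  have habsint : 0 ≤ ∫ ω, |Yg ω - mg| ∂μ := integral_nonneg fun ω => abs_nonneg _
  have habsint2 : 0 ≤ ∫ ω, |Yf ω| ∂μ := integral_nonneg fun ω => abs_nonneg _
  show ∫ ω, |(Yf ω - mf) * (Yg ω - mg) - f ω * g ω| ∂μ ≤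
      Real.sqrt (Af + s ^ 2 / t ^ 2 * Ag) * Real.sqrt (Ag + t ^ 2 / s ^ 2 * Af) +
      Real.sqrt Af * Real.sqrt (Bg - Ag) + Real.sqrt Ag * Real.sqrt (Bf - Af)
  calc ∫ ω, |(Yf ω - mf) * (Yg ω - mg) - f ω * g ω| ∂μ
      ≤ (∫ ω, |Wf ω * Wg ω| ∂μ) + |mf| * ∫ ω, |Yg ω - mg| ∂μ + |mg| * ∫ ω, |Yf ω| ∂μ := hmono
    _ ≤ Real.sqrt (Af + s ^ 2 / t ^ 2 * Ag) * Real.sqrt (Ag + t ^ 2 / s ^ 2 * Af) +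
        Real.sqrt Af * Real.sqrt (Bg - Ag) + Real.sqrt Ag * Real.sqrt (Bf - Af) := by
        exact add_le_add (add_le_add hterm1
          (mul_le_mul hmfb hterm2b habsint (Real.sqrt_nonneg _)))
          (mul_le_mul hmgb hterm3b habsint2 (Real.sqrt_nonneg _))

set_option maxHeartbeats 1600000 in
/-- Truncation impact on second moments: for every `j, k`,
`Ē[|x̃_{ij} x̃_{ik} − x_{ij} x_{ik}|] ≤ (3/2)(Ē[x_{ij}²] + Ē[x_{ik}²]) φ(u)`,
where `φ(u) ≥ 0` satisfies
`Ē[x_{ij}² 1{|x_{ij}| > u (Ē[x_{ij}²])^{1/2}}] ≤ φ(u)² Ē[x_{ij}²]` for all `j`. -/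
theorem truncation_second_moment_impact {Ω : Type*} [MeasurableSpace Ω]
    (μ : Measure Ω) [IsProbabilityMeasure μ] (n p : ℕ) (hn : 0 < n)
    (x : Fin n → Fin p → Ω → ℝ)
    (hmeas : ∀ i j, Measurable (x i j))
    (hcen : ∀ i j, ∫ ω, x i j ω ∂μ = 0)
    (hint1 : ∀ i j, Integrable (x i j) μ)
    (hint2 : ∀ i j, Integrable (fun ω => (x i j ω) ^ 2) μ)
    (hintp : ∀ i j k, Integrable (fun ω => x i j ω * x i k ω) μ)
    (u : ℝ) (hu : 0 < u) (φ : ℝ) (hφ : 0 ≤ φ)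
    (hφ2 : ∀ j, (n : ℝ)⁻¹ * ∑ i, ∫ ω,
        (if u * Real.sqrt (avgSecondMoment μ n p x j) < |x i j ω|
          then (x i j ω) ^ 2 else 0) ∂μ ≤ φ ^ 2 * avgSecondMoment μ n p x j)
    (j k : Fin p) :
    (n : ℝ)⁻¹ * ∑ i, ∫ ω,
        |truncVar μ n p x u i j ω * truncVar μ n p x u i k ω -
          x i j ω * x i k ω| ∂μ ≤
      (3 / 2) * (avgSecondMoment μ n p x j + avgSecondMoment μ n p x k) * φ := by
  classical
  have hnn : (0:ℝ) ≤ (n : ℝ)⁻¹ := by positivity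
  have havg0 : ∀ j' : Fin p, 0 ≤ avgSecondMoment μ n p x j' := fun j' =>
    mul_nonneg hnn (Finset.sum_nonneg fun i _ => integral_nonneg fun ω => sq_nonneg _)
  -- degenerate helper
  have hzero : ∀ (j' k' : Fin p), avgSecondMoment μ n p x j' = 0 → ∀ i : Fin n,
      ∫ ω, |truncVar μ n p x u i j' ω * truncVar μ n p x u i k' ω -
        x i j' ω * x i k' ω| ∂μ = 0 := by
    intro j' k' hz i
    have hsum : ∑ i : Fin n, ∫ ω, (x i j' ω) ^ 2 ∂μ = 0 := by
      have hne : ((n : ℝ))⁻¹ ≠ 0 := by positivity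
      have := hz
      unfold avgSecondMoment at this
      exact (mul_eq_zero.mp this).resolve_left hne
    have hi0 : ∫ ω, (x i j' ω) ^ 2 ∂μ = 0 := by
      have := (Finset.sum_eq_zero_iff_of_nonneg
        (fun i _ => integral_nonneg fun ω => sq_nonneg (x i j' ω))).mp hsum
      exact this i (Finset.mem_univ i)
    have hae : x i j' =ᵐ[μ] 0 := by
      have h2 : (fun ω => (x i j' ω) ^ 2) =ᵐ[μ] 0 := by
        rw [← integral_eq_zero_iff_of_nonneg (fun ω => sq_nonneg _) (hint2 i j')]
        exact hi0
      filter_upwards [h2] with ω hω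
      exact pow_eq_zero_iff (n := 2) (by norm_num) |>.mp hω
    have hY0 : (fun ω => if |x i j' ω| ≤ u * Real.sqrt (avgSecondMoment μ n p x j')
        then x i j' ω else 0) =ᵐ[μ] 0 := by
      filter_upwards [hae] with ω hω
      simp [hω]
    have hm0 : (∫ ω', (if |x i j' ω'| ≤ u * Real.sqrt (avgSecondMoment μ n p x j')
        then x i j' ω' else 0) ∂μ) = 0 := by
      rw [integral_congr_ae hY0]
      simp
    have htv : truncVar μ n p x u i j' =ᵐ[μ] 0 := by
      filter_upwards [hY0] with ω hω
      unfold truncVar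
      rw [hω, hm0]
      simp
    have hiz : (fun ω => |truncVar μ n p x u i j' ω * truncVar μ n p x u i k' ω -
        x i j' ω * x i k' ω|) =ᵐ[μ] 0 := by
      filter_upwards [htv, hae] with ω h1 h2
      simp only [Pi.zero_apply] at h1 h2
      simp [h1, h2]
    rw [integral_congr_ae hiz]
    simp
  have hRHS0 : 0 ≤ (3 / 2) * (avgSecondMoment μ n p x j + avgSecondMoment μ n p x k) * φ := by
    have := havg0 j; have := havg0 k
    positivity
  by_cases hjz : avgSecondMoment μ n p x j = 0
  · have : ∀ i : Fin n, ∫ ω, |truncVar μ n p x u i j ω * truncVar μ n p x u i k ω -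
        x i j ω * x i k ω| ∂μ = 0 := hzero j k hjz
    calc (n : ℝ)⁻¹ * ∑ i, ∫ ω, |truncVar μ n p x u i j ω * truncVar μ n p x u i k ω -
          x i j ω * x i k ω| ∂μ = 0 := by
          rw [Finset.sum_congr rfl fun i _ => this i]
          simp
      _ ≤ _ := hRHS0
  by_cases hkz : avgSecondMoment μ n p x k = 0
  · have h0 : ∀ i : Fin n, ∫ ω, |truncVar μ n p x u i k ω * truncVar μ n p x u i j ω -
        x i k ω * x i j ω| ∂μ = 0 := hzero k j hkz
    have h0' : ∀ i : Fin n, ∫ ω, |truncVar μ n p x u i j ω * truncVar μ n p x u i k ω -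
        x i j ω * x i k ω| ∂μ = 0 := by
      intro i
      rw [← h0 i]
      congr 1
      funext ω
      ring_nf
    calc (n : ℝ)⁻¹ * ∑ i, ∫ ω, |truncVar μ n p x u i j ω * truncVar μ n p x u i k ω -
          x i j ω * x i k ω| ∂μ = 0 := by
          rw [Finset.sum_congr rfl fun i _ => h0' i]
          simp
      _ ≤ _ := hRHS0
  -- main case
  set σj := avgSecondMoment μ n p x j with hσj
  set σk := avgSecondMoment μ n p x k with hσk
  have hσjpos : 0 < σj := lt_of_le_of_ne (havg0 j) (Ne.symm hjz)
  have hσkpos : 0 < σk := lt_of_le_of_ne (havg0 k) (Ne.symm hkz)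
  have hsj : 0 < u * Real.sqrt σj := mul_pos hu (Real.sqrt_pos.2 hσjpos)
  have hsk : 0 < u * Real.sqrt σk := mul_pos hu (Real.sqrt_pos.2 hσkpos)
  set αj : Fin n → ℝ := fun i =>
    ∫ ω, (if |x i j ω| ≤ u * Real.sqrt σj then 0 else x i j ω) ^ 2 ∂μ with hαj
  set αk : Fin n → ℝ := fun i =>
    ∫ ω, (if |x i k ω| ≤ u * Real.sqrt σk then 0 else x i k ω) ^ 2 ∂μ with hαk
  set βj : Fin n → ℝ := fun i => ∫ ω, (x i j ω) ^ 2 ∂μ with hβj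
  set βk : Fin n → ℝ := fun i => ∫ ω, (x i k ω) ^ 2 ∂μ with hβk
  have hαj0 : ∀ i, 0 ≤ αj i := fun i => integral_nonneg fun ω => sq_nonneg _
  have hαk0 : ∀ i, 0 ≤ αk i := fun i => integral_nonneg fun ω => sq_nonneg _
  -- Z² integrable and αj ≤ βj
  have hZint : ∀ (i : Fin n) (j' : Fin p) (c : ℝ),
      Integrable (fun ω => (if |x i j' ω| ≤ c then 0 else x i j' ω) ^ 2) μ := by
    intro i j' c
    refine (hint2 i j').mono' ?_ ?_
    · exact ((Measurable.ite (measurableSet_le (hmeas i j').abs measurable_const)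
        measurable_const (hmeas i j')).pow_const 2).aestronglyMeasurable
    · filter_upwards with ω
      rw [Real.norm_eq_abs, abs_pow]
      split_ifs with h
      · simpa using sq_nonneg (x i j' ω)
      · rw [sq_abs]
  have hαβj : ∀ i, αj i ≤ βj i := by
    intro i
    apply integral_mono (hZint i j _) (hint2 i j)
    intro ω
    dsimp only
    split_ifs
    · simpa using sq_nonneg (x i j ω)
    · exact le_rfl
  have hαβk : ∀ i, αk i ≤ βk i := by
    intro i
    apply integral_mono (hZint i k _) (hint2 i k)
    intro ω
    dsimp only
    split_ifs
    · simpa using sq_nonneg (x i k ω)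
    · exact le_rfl
  -- per-i bound
  have key : ∀ i : Fin n,
      ∫ ω, |truncVar μ n p x u i j ω * truncVar μ n p x u i k ω - x i j ω * x i k ω| ∂μ ≤
        Real.sqrt (αj i + σj / σk * αk i) * Real.sqrt (αk i + σk / σj * αj i) +
        Real.sqrt (αj i) * Real.sqrt (βk i - αk i) +
        Real.sqrt (αk i) * Real.sqrt (βj i - αj i) := by
    intro i
    have h := trunc_per_i μ (x i j) (x i k) (hmeas i j) (hmeas i k) (hint1 i j) (hint1 i k)
      (hint2 i j) (hint2 i k) (hintp i j k) (hcen i j) (hcen i k)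
      (u * Real.sqrt σj) (u * Real.sqrt σk) hsj hsk
    have hc1 : (u * Real.sqrt σj) ^ 2 / (u * Real.sqrt σk) ^ 2 = σj / σk := by
      rw [mul_pow, mul_pow, Real.sq_sqrt (havg0 j), Real.sq_sqrt (havg0 k)]
      rw [mul_div_mul_left _ _ (by positivity : (u:ℝ) ^ 2 ≠ 0)]
    have hc2 : (u * Real.sqrt σk) ^ 2 / (u * Real.sqrt σj) ^ 2 = σk / σj := by
      rw [mul_pow, mul_pow, Real.sq_sqrt (havg0 j), Real.sq_sqrt (havg0 k)]
      rw [mul_div_mul_left _ _ (by positivity : (u:ℝ) ^ 2 ≠ 0)]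
    rw [hc1, hc2] at h
    simp only [truncVar, ← hσj, ← hσk]
    exact h
  set Aj : ℝ := (n : ℝ)⁻¹ * ∑ i, αj i with hAj
  set Ak : ℝ := (n : ℝ)⁻¹ * ∑ i, αk i with hAk
  have hAj0 : 0 ≤ Aj := mul_nonneg hnn (Finset.sum_nonneg fun i _ => hαj0 i)
  have hAk0 : 0 ≤ Ak := mul_nonneg hnn (Finset.sum_nonneg fun i _ => hαk0 i)
  have hAjσ : Aj ≤ σj := by
    rw [hAj, hσj]
    unfold avgSecondMoment
    exact mul_le_mul_of_nonneg_left (Finset.sum_le_sum fun i _ => hαβj i) hnn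
  have hAkσ : Ak ≤ σk := by
    rw [hAk, hσk]
    unfold avgSecondMoment
    exact mul_le_mul_of_nonneg_left (Finset.sum_le_sum fun i _ => hαβk i) hnn
  have hiff : ∀ (i : Fin n) (j' : Fin p) (c : ℝ) (ω : Ω),
      (if |x i j' ω| ≤ c then (0:ℝ) else x i j' ω) ^ 2 =
        (if c < |x i j' ω| then (x i j' ω) ^ 2 else 0) := by
    intro i j' c ω
    by_cases hc : |x i j' ω| ≤ c
    · rw [if_pos hc, if_neg (not_lt.mpr hc)]
      norm_num
    · rw [if_neg hc, if_pos (not_le.mp hc)]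
  have hAjφ : Aj ≤ φ ^ 2 * σj := by
    have h := hφ2 j
    rw [← hσj] at h
    have e : Aj = (n : ℝ)⁻¹ * ∑ i, ∫ ω,
        (if u * Real.sqrt σj < |x i j ω| then (x i j ω) ^ 2 else 0) ∂μ := by
      rw [hAj]
      congr 1
      refine Finset.sum_congr rfl fun i _ => ?_
      refine integral_congr_ae (Filter.Eventually.of_forall fun ω => ?_)
      exact hiff i j _ ω
    rw [e]
    exact h
  have hAkφ : Ak ≤ φ ^ 2 * σk := by
    have h := hφ2 k
    rw [← hσk] at h
    have e : Ak = (n : ℝ)⁻¹ * ∑ i, ∫ ω,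
        (if u * Real.sqrt σk < |x i k ω| then (x i k ω) ^ 2 else 0) ∂μ := by
      rw [hAk]
      congr 1
      refine Finset.sum_congr rfl fun i _ => ?_
      refine integral_congr_ae (Filter.Eventually.of_forall fun ω => ?_)
      exact hiff i k _ ω
    rw [e]
    exact h
  -- aggregated CS bounds
  have hT1 : (n : ℝ)⁻¹ * ∑ i, Real.sqrt (αj i + σj / σk * αk i) *
        Real.sqrt (αk i + σk / σj * αj i) ≤
      Real.sqrt (Aj + σj / σk * Ak) * Real.sqrt (Ak + σk / σj * Aj) := by
    have h := avg_sqrt_CS (fun i => αj i + σj / σk * αk i) (fun i => αk i + σk / σj * αj i)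
      (fun i => add_nonneg (hαj0 i) (mul_nonneg (by positivity) (hαk0 i)))
      (fun i => add_nonneg (hαk0 i) (mul_nonneg (by positivity) (hαj0 i)))
    have e1 : (n : ℝ)⁻¹ * ∑ i, (αj i + σj / σk * αk i) = Aj + σj / σk * Ak := by
      rw [Finset.sum_add_distrib, ← Finset.mul_sum, hAj, hAk]
      ring
    have e2 : (n : ℝ)⁻¹ * ∑ i, (αk i + σk / σj * αj i) = Ak + σk / σj * Aj := by
      rw [Finset.sum_add_distrib, ← Finset.mul_sum, hAj, hAk]
      ring
    rwa [e1, e2] at h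
  have hT2 : (n : ℝ)⁻¹ * ∑ i, Real.sqrt (αj i) * Real.sqrt (βk i - αk i) ≤
      Real.sqrt Aj * Real.sqrt (σk - Ak) := by
    have h := avg_sqrt_CS αj (fun i => βk i - αk i) hαj0
      (fun i => sub_nonneg.mpr (hαβk i))
    have e2 : (n : ℝ)⁻¹ * ∑ i, (βk i - αk i) = σk - Ak := by
      rw [Finset.sum_sub_distrib, hσk, hAk]
      unfold avgSecondMoment
      rw [hβk]
      ring
    rwa [← hAj, e2] at h
  have hT3 : (n : ℝ)⁻¹ * ∑ i, Real.sqrt (αk i) * Real.sqrt (βj i - αj i) ≤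
      Real.sqrt Ak * Real.sqrt (σj - Aj) := by
    have h := avg_sqrt_CS αk (fun i => βj i - αj i) hαk0
      (fun i => sub_nonneg.mpr (hαβj i))
    have e2 : (n : ℝ)⁻¹ * ∑ i, (βj i - αj i) = σj - Aj := by
      rw [Finset.sum_sub_distrib, hσj, hAj]
      unfold avgSecondMoment
      rw [hβj]
      ring
    rwa [← hAk, e2] at h
  -- endgame scalars
  set a := Real.sqrt (Aj / σj) with hadef
  set b := Real.sqrt (Ak / σk) with hbdef
  have ha0 : 0 ≤ a := Real.sqrt_nonneg _
  have hb0 : 0 ≤ b := Real.sqrt_nonneg _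
  have ha2 : a ^ 2 = Aj / σj := Real.sq_sqrt (div_nonneg hAj0 hσjpos.le)
  have hb2 : b ^ 2 = Ak / σk := Real.sq_sqrt (div_nonneg hAk0 hσkpos.le)
  have hAja : Aj = a ^ 2 * σj := by rw [ha2]; field_simp
  have hAkb : Ak = b ^ 2 * σk := by rw [hb2]; field_simp
  have ha1 : a ≤ 1 := Real.sqrt_le_one.mpr ((div_le_one hσjpos).mpr hAjσ)
  have hb1 : b ≤ 1 := Real.sqrt_le_one.mpr ((div_le_one hσkpos).mpr hAkσ)
  have haφ : a ≤ φ := by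
    rw [hadef]
    calc Real.sqrt (Aj / σj) ≤ Real.sqrt (φ ^ 2) :=
          Real.sqrt_le_sqrt ((div_le_iff₀ hσjpos).mpr hAjφ)
      _ = φ := Real.sqrt_sq hφ
  have hbφ : b ≤ φ := by
    rw [hbdef]
    calc Real.sqrt (Ak / σk) ≤ Real.sqrt (φ ^ 2) :=
          Real.sqrt_le_sqrt ((div_le_iff₀ hσkpos).mpr hAkφ)
      _ = φ := Real.sqrt_sq hφ
  have hab2 : (0:ℝ) ≤ a ^ 2 + b ^ 2 := by positivity
  have h1b2 : (0:ℝ) ≤ 1 - b ^ 2 := sub_nonneg.mpr (pow_le_one₀ hb0 hb1)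
  have h1a2 : (0:ℝ) ≤ 1 - a ^ 2 := sub_nonneg.mpr (pow_le_one₀ ha0 ha1)
  have e1 : Aj + σj / σk * Ak = (a ^ 2 + b ^ 2) * σj := by
    rw [hAja, hAkb]
    field_simp
  have e2 : Ak + σk / σj * Aj = (a ^ 2 + b ^ 2) * σk := by
    rw [hAja, hAkb]
    field_simp
    ring
  have e3 : σk - Ak = (1 - b ^ 2) * σk := by rw [hAkb]; ring
  have e4 : σj - Aj = (1 - a ^ 2) * σj := by rw [hAja]; ring
  have E1 : Real.sqrt ((a ^ 2 + b ^ 2) * σj) * Real.sqrt ((a ^ 2 + b ^ 2) * σk) =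
      (a ^ 2 + b ^ 2) * (Real.sqrt σj * Real.sqrt σk) := by
    rw [Real.sqrt_mul hab2, Real.sqrt_mul hab2]
    have h2 := Real.mul_self_sqrt hab2
    linear_combination (Real.sqrt σj * Real.sqrt σk) * h2
  have E2 : Real.sqrt Aj = a * Real.sqrt σj := by
    rw [hAja, Real.sqrt_mul (sq_nonneg a), Real.sqrt_sq ha0]
  have E2' : Real.sqrt Ak = b * Real.sqrt σk := by
    rw [hAkb, Real.sqrt_mul (sq_nonneg b), Real.sqrt_sq hb0]
  have E3 : Real.sqrt ((1 - b ^ 2) * σk) = Real.sqrt (1 - b ^ 2) * Real.sqrt σk :=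
    Real.sqrt_mul h1b2 _
  have E4 : Real.sqrt ((1 - a ^ 2) * σj) = Real.sqrt (1 - a ^ 2) * Real.sqrt σj :=
    Real.sqrt_mul h1a2 _
  calc (n : ℝ)⁻¹ * ∑ i, ∫ ω, |truncVar μ n p x u i j ω * truncVar μ n p x u i k ω -
        x i j ω * x i k ω| ∂μ
      ≤ (n : ℝ)⁻¹ * ∑ i, (Real.sqrt (αj i + σj / σk * αk i) *
          Real.sqrt (αk i + σk / σj * αj i) +
          Real.sqrt (αj i) * Real.sqrt (βk i - αk i) +
          Real.sqrt (αk i) * Real.sqrt (βj i - αj i)) :=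
        mul_le_mul_of_nonneg_left (Finset.sum_le_sum fun i _ => key i) hnn
    _ = (n : ℝ)⁻¹ * ∑ i, Real.sqrt (αj i + σj / σk * αk i) *
          Real.sqrt (αk i + σk / σj * αj i) +
        (n : ℝ)⁻¹ * ∑ i, Real.sqrt (αj i) * Real.sqrt (βk i - αk i) +
        (n : ℝ)⁻¹ * ∑ i, Real.sqrt (αk i) * Real.sqrt (βj i - αj i) := by
        rw [Finset.sum_add_distrib, Finset.sum_add_distrib]
        ring
    _ ≤ Real.sqrt (Aj + σj / σk * Ak) * Real.sqrt (Ak + σk / σj * Aj) +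
        Real.sqrt Aj * Real.sqrt (σk - Ak) + Real.sqrt Ak * Real.sqrt (σj - Aj) :=
        add_le_add (add_le_add hT1 hT2) hT3
    _ = (a ^ 2 + b ^ 2 + a * Real.sqrt (1 - b ^ 2) + b * Real.sqrt (1 - a ^ 2)) *
          (Real.sqrt σj * Real.sqrt σk) := by
        rw [e1, e2, e3, e4, E1, E2, E2', E3, E4]
        ring
    _ ≤ (3 * φ) * (Real.sqrt σj * Real.sqrt σk) :=
        mul_le_mul_of_nonneg_right (key_scalar ha0 hb0 ha1 hb1 haφ hbφ)
          (mul_nonneg (Real.sqrt_nonneg _) (Real.sqrt_nonneg _))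
    _ ≤ 3 / 2 * (σj + σk) * φ := final_amgm hσjpos.le hσkpos.le hφ
end

section
/- Identifiability lower bound via restricted eigenvalue: in the linear regression model with design vectors z_i ∈ ℝ^p, suppose β ∈ ℝ^p has at most s nonzero entries. Then the identifiability factor κ_pr(β) := inf{ max_{1≤j≤p} |E_n[z_{ij}(z_i'δ)]| / ‖δ‖_pr : δ ∈ R(β), ‖δ‖_pr ≠ 0 } satisfies κ_pr(β) ≥ 2⁻¹ s^{−1/2} κ(s,1), where ‖δ‖_pr = (E_n[(z_i'δ)²])^{1/2}, R(β) = {δ : ‖β+δ‖_{ℓ₁} ≤ ‖β‖_{ℓ₁}}, and κ(s,1) is the restricted eigenvalue: κ(s,1) := inf over subsets S of size ≤ s containing the support of β and δ with ‖δ_{S^c}‖_{ℓ₁} ≤ ‖δ_S‖_{ℓ₁} of √s ‖δ‖_pr / ‖δ_S‖_{ℓ₁}. -/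
/-- Empirical prediction seminorm `‖δ‖_pr = (n⁻¹ ∑_i (z_i'δ)²)^{1/2}`. -/
noncomputable def predNorm (n p : ℕ) (z : Fin n → Fin p → ℝ) (δ : Fin p → ℝ) : ℝ :=
  Real.sqrt ((n : ℝ)⁻¹ * ∑ i, (∑ j, z i j * δ j) ^ 2)

/-- `ℓ₁`-norm on `ℝ^p`. -/
noncomputable def l1Norm {p : ℕ} (δ : Fin p → ℝ) : ℝ := ∑ j, |δ j|

lemma predNorm_nonneg (n p : ℕ) (z : Fin n → Fin p → ℝ) (δ : Fin p → ℝ) :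
    0 ≤ predNorm n p z δ := Real.sqrt_nonneg _

lemma predNorm_arg_nonneg (n p : ℕ) (z : Fin n → Fin p → ℝ) (δ : Fin p → ℝ) :
    0 ≤ (n : ℝ)⁻¹ * ∑ i, (∑ j, z i j * δ j) ^ 2 := by positivity

lemma sq_predNorm (n p : ℕ) (z : Fin n → Fin p → ℝ) (δ : Fin p → ℝ) :
    predNorm n p z δ ^ 2 = (n : ℝ)⁻¹ * ∑ i, (∑ j, z i j * δ j) ^ 2 :=
  Real.sq_sqrt (predNorm_arg_nonneg n p z δ)

lemma l1Norm_nonneg {p : ℕ} (δ : Fin p → ℝ) : 0 ≤ l1Norm δ :=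
  Finset.sum_nonneg fun _ _ => abs_nonneg _

lemma l1Norm_eq_zero {p : ℕ} {δ : Fin p → ℝ} (h : l1Norm δ = 0) : δ = 0 := by
  funext j
  have := (Finset.sum_eq_zero_iff_of_nonneg (fun j _ => abs_nonneg (δ j))).mp h j
    (Finset.mem_univ j)
  simpa [abs_eq_zero] using this

lemma key_identity (n p : ℕ) (z : Fin n → Fin p → ℝ) (δ : Fin p → ℝ) :
    ∑ i, (∑ j, z i j * δ j) ^ 2
      = ∑ j, δ j * ∑ i, z i j * (∑ k, z i k * δ k) := by
  have h1 : ∀ i, (∑ j, z i j * δ j) ^ 2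
      = ∑ j, δ j * (z i j * (∑ k, z i k * δ k)) := by
    intro i
    rw [sq, Finset.sum_mul]
    exact Finset.sum_congr rfl (fun j _ => by ring)
  simp_rw [h1]
  rw [Finset.sum_comm]
  exact Finset.sum_congr rfl (fun j _ => (Finset.mul_sum _ _ _).symm)

lemma cone_of_l1 {p : ℕ} (β δ : Fin p → ℝ) (h : l1Norm (β + δ) ≤ l1Norm β) :
    (∑ j ∈ Finset.univ.filter (fun j => β j = 0), |δ j|) ≤
      ∑ j ∈ Finset.univ.filter (fun j => β j ≠ 0), |δ j| := by
  classical
  have hsplit : ∀ g : Fin p → ℝ,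
      (∑ j ∈ Finset.univ.filter (fun j => β j = 0), g j) +
        (∑ j ∈ Finset.univ.filter (fun j => β j ≠ 0), g j) = ∑ j, g j := fun g =>
    Finset.sum_filter_add_sum_filter_not Finset.univ (fun j => β j = 0) g
  have h1 : l1Norm (β + δ) = (∑ j ∈ Finset.univ.filter (fun j => β j = 0), |δ j|) +
      ∑ j ∈ Finset.univ.filter (fun j => β j ≠ 0), |β j + δ j| := by
    rw [show l1Norm (β + δ) = ∑ j, |β j + δ j| from rfl,
      ← hsplit (fun j => |β j + δ j|)]
    congr 1
    refine Finset.sum_congr rfl fun j hj => ?_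
    rw [(Finset.mem_filter.mp hj).2, zero_add]
  have h2 : l1Norm β = ∑ j ∈ Finset.univ.filter (fun j => β j ≠ 0), |β j| := by
    rw [show l1Norm β = ∑ j, |β j| from rfl, ← hsplit (fun j => |β j|)]
    have hz : ∑ j ∈ Finset.univ.filter (fun j => β j = 0), |β j| = 0 :=
      Finset.sum_eq_zero fun j hj => by rw [(Finset.mem_filter.mp hj).2, abs_zero]
    rw [hz, zero_add]
  have h3 : ∑ j ∈ Finset.univ.filter (fun j => β j ≠ 0), |β j| ≤
      (∑ j ∈ Finset.univ.filter (fun j => β j ≠ 0), |β j + δ j|) +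
        ∑ j ∈ Finset.univ.filter (fun j => β j ≠ 0), |δ j| := by
    rw [← Finset.sum_add_distrib]
    refine Finset.sum_le_sum fun j _ => ?_
    calc |β j| = |(β j + δ j) + (-δ j)| := by congr 1; ring
      _ ≤ |β j + δ j| + |(-δ j)| := abs_add_le _ _
      _ = |β j + δ j| + |δ j| := by rw [abs_neg]
  linarith

/-- Identifiability lower bound via restricted eigenvalue: if `β`
has at most `s` nonzero entries, then the identifiability factor
`κ_pr(β) = inf { max_j |E_n[z_{ij}(z_i'δ)]| / ‖δ‖_pr : δ ∈ R(β), ‖δ‖_pr ≠ 0 }`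
satisfies `κ_pr(β) ≥ 2⁻¹ s^{−1/2} κ(s,1)`, where `R(β) = {δ : ‖β+δ‖₁ ≤ ‖β‖₁}` and
`κ(s,1) = inf { √s ‖δ‖_pr / ‖δ_{S₀}‖₁ : ‖δ_{S₀ᶜ}‖₁ ≤ ‖δ_{S₀}‖₁, δ ≠ 0 }` with `S₀`
the support of `β`. -/
theorem identifiability_factor_RE_bound (n p s : ℕ) (hn : 0 < n) (hp : 0 < p)
    (z : Fin n → Fin p → ℝ) (β : Fin p → ℝ)
    (hsparse : (Finset.univ.filter fun j => β j ≠ 0).card ≤ s) :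
    2⁻¹ * (Real.sqrt s)⁻¹ *
        sInf {r : ℝ | ∃ δ : Fin p → ℝ, δ ≠ 0 ∧
          (∑ j ∈ Finset.univ.filter (fun j => β j = 0), |δ j|) ≤
            (∑ j ∈ Finset.univ.filter (fun j => β j ≠ 0), |δ j|) ∧
          r = Real.sqrt s * predNorm n p z δ /
            (∑ j ∈ Finset.univ.filter (fun j => β j ≠ 0), |δ j|)} ≤
      sInf {r : ℝ | ∃ δ : Fin p → ℝ,
        l1Norm (β + δ) ≤ l1Norm β ∧ predNorm n p z δ ≠ 0 ∧
        r = (Finset.univ.sup' ⟨⟨0, hp⟩, Finset.mem_univ _⟩ fun j =>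
            |(n : ℝ)⁻¹ * ∑ i, z i j * (∑ k, z i k * δ k)|) /
          predNorm n p z δ} := by
  classical
  set A : Set ℝ := {r : ℝ | ∃ δ : Fin p → ℝ, δ ≠ 0 ∧
          (∑ j ∈ Finset.univ.filter (fun j => β j = 0), |δ j|) ≤
            (∑ j ∈ Finset.univ.filter (fun j => β j ≠ 0), |δ j|) ∧
          r = Real.sqrt s * predNorm n p z δ /
            (∑ j ∈ Finset.univ.filter (fun j => β j ≠ 0), |δ j|)} with hAdef
  set B : Set ℝ := {r : ℝ | ∃ δ : Fin p → ℝ,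
        l1Norm (β + δ) ≤ l1Norm β ∧ predNorm n p z δ ≠ 0 ∧
        r = (Finset.univ.sup' ⟨⟨0, hp⟩, Finset.mem_univ _⟩ fun j =>
            |(n : ℝ)⁻¹ * ∑ i, z i j * (∑ k, z i k * δ k)|) /
          predNorm n p z δ} with hBdef
  have hAbdd : BddBelow A := by
    refine ⟨0, fun r hr => ?_⟩
    rw [hAdef] at hr
    obtain ⟨δ, -, -, rfl⟩ := hr
    have h1 := predNorm_nonneg n p z δ
    have h2 : 0 ≤ ∑ j ∈ Finset.univ.filter (fun j => β j ≠ 0), |δ j| :=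
      Finset.sum_nonneg fun j _ => abs_nonneg _
    positivity
  have hBne0 : ∀ r ∈ B, 0 ≤ r := by
    intro r hr
    rw [hBdef] at hr
    obtain ⟨δ, -, hpr, rfl⟩ := hr
    have h1 : 0 < predNorm n p z δ := (predNorm_nonneg n p z δ).lt_of_ne (Ne.symm hpr)
    have h2 : (0:ℝ) ≤ Finset.univ.sup' ⟨⟨0, hp⟩, Finset.mem_univ _⟩ fun j =>
        |(n : ℝ)⁻¹ * ∑ i, z i j * (∑ k, z i k * δ k)| :=
      le_trans (abs_nonneg ((n : ℝ)⁻¹ * ∑ i, z i ⟨0, hp⟩ * (∑ k, z i k * δ k)))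
        (Finset.le_sup'
          (fun j => |(n : ℝ)⁻¹ * ∑ i, z i j * (∑ k, z i k * δ k)|)
          (Finset.mem_univ (⟨0, hp⟩ : Fin p)))
    positivity
  by_cases hBne : B.Nonempty
  · refine le_csInf hBne ?_
    intro r hr
    rw [hBdef] at hr
    obtain ⟨δ, hR, hpr, rfl⟩ := hr
    have hcone := cone_of_l1 β δ hR
    have hPpos : 0 < predNorm n p z δ := (predNorm_nonneg n p z δ).lt_of_ne (Ne.symm hpr)
    have hδne : δ ≠ 0 := by
      rintro rfl
      apply hpr
      simp [predNorm]
    set P := predNorm n p z δ with hPdef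
    set D := ∑ j ∈ Finset.univ.filter (fun j => β j ≠ 0), |δ j| with hDdef
    set Dc := ∑ j ∈ Finset.univ.filter (fun j => β j = 0), |δ j| with hDcdef
    set M := Finset.univ.sup' ⟨⟨0, hp⟩, Finset.mem_univ _⟩ (fun j =>
        |(n : ℝ)⁻¹ * ∑ i, z i j * (∑ k, z i k * δ k)|) with hMdef
    have hMnonneg : 0 ≤ M := by
      rw [hMdef]
      exact le_trans (abs_nonneg ((n : ℝ)⁻¹ * ∑ i, z i ⟨0, hp⟩ * (∑ k, z i k * δ k)))
        (Finset.le_sup'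
          (fun j => |(n : ℝ)⁻¹ * ∑ i, z i j * (∑ k, z i k * δ k)|)
          (Finset.mem_univ (⟨0, hp⟩ : Fin p)))
    have hq : P ^ 2 = ∑ j, δ j * ((n:ℝ)⁻¹ * ∑ i, z i j * (∑ k, z i k * δ k)) := by
      rw [hPdef, sq_predNorm, key_identity, Finset.mul_sum]
      exact Finset.sum_congr rfl fun j _ => by ring
    have hle : P ^ 2 ≤ (∑ j, |δ j|) * M := by
      rw [hq, Finset.sum_mul]
      refine Finset.sum_le_sum fun j _ => ?_
      calc δ j * ((n:ℝ)⁻¹ * ∑ i, z i j * (∑ k, z i k * δ k))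
          ≤ |δ j * ((n:ℝ)⁻¹ * ∑ i, z i j * (∑ k, z i k * δ k))| := le_abs_self _
        _ = |δ j| * |(n:ℝ)⁻¹ * ∑ i, z i j * (∑ k, z i k * δ k)| := abs_mul _ _
        _ ≤ |δ j| * M := by
            rw [hMdef]
            exact mul_le_mul_of_nonneg_left
              (Finset.le_sup' (fun j => |(n : ℝ)⁻¹ * ∑ i, z i j * (∑ k, z i k * δ k)|)
                (Finset.mem_univ j)) (abs_nonneg _)
    have hsum : (∑ j, |δ j|) = Dc + D :=
      (Finset.sum_filter_add_sum_filter_not Finset.univ (fun j => β j = 0)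
        (fun j => |δ j|)).symm
    have hkey : P ^ 2 ≤ 2 * (D * M) := by
      have h2D : (∑ j, |δ j|) ≤ 2 * D := by rw [hsum]; linarith
      calc P ^ 2 ≤ (∑ j, |δ j|) * M := hle
        _ ≤ 2 * D * M := mul_le_mul_of_nonneg_right h2D hMnonneg
        _ = 2 * (D * M) := by ring
    have hDpos : 0 < D := by
      by_contra hcon
      push_neg at hcon
      nlinarith [pow_pos hPpos 2, mul_nonneg (neg_nonneg.mpr hcon) hMnonneg]
    have hs : 0 < s := by
      rcases Nat.eq_zero_or_pos s with h0 | h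
      · exfalso
        have hfe : (Finset.univ.filter fun j => β j ≠ 0) = ∅ :=
          Finset.card_eq_zero.mp (Nat.le_antisymm (h0 ▸ hsparse) (Nat.zero_le _))
        have : D = 0 := by rw [hDdef, hfe, Finset.sum_empty]
        linarith
      · exact h
    have hsqs : 0 < Real.sqrt s := Real.sqrt_pos.mpr (by exact_mod_cast hs)
    have hmem : Real.sqrt s * P / D ∈ A := by
      rw [hAdef]
      exact ⟨δ, hδne, hcone, rfl⟩
    have hInfA : sInf A ≤ Real.sqrt s * P / D := csInf_le hAbdd hmem
    have hfrac : P / (2 * D) ≤ M / P := by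
      rw [div_le_div_iff₀ (by positivity) hPpos]
      nlinarith
    have hs1 : Real.sqrt s ≠ 0 := hsqs.ne'
    have hD1 : D ≠ 0 := hDpos.ne'
    calc 2⁻¹ * (Real.sqrt s)⁻¹ * sInf A
        ≤ 2⁻¹ * (Real.sqrt s)⁻¹ * (Real.sqrt s * P / D) :=
          mul_le_mul_of_nonneg_left hInfA (by positivity)
      _ = P / (2 * D) := by field_simp
      _ ≤ M / P := hfrac
  · have hBempty : B = ∅ := Set.not_nonempty_iff_eq_empty.mp hBne
    rw [hBempty, Real.sInf_empty]
    have hA0 : sInf A ≤ 0 := by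
      rcases Set.eq_empty_or_nonempty A with hAe | ⟨r, hr⟩
      · rw [hAe, Real.sInf_empty]
      · rw [hAdef] at hr
        obtain ⟨δ, hδne, hcone, rfl⟩ := hr
        by_cases hPδ : predNorm n p z δ = 0
        · have hz : Real.sqrt s * predNorm n p z δ /
              (∑ j ∈ Finset.univ.filter (fun j => β j ≠ 0), |δ j|) = 0 := by
            rw [hPδ, mul_zero, zero_div]
          refine (csInf_le hAbdd ?_).trans hz.le
          rw [hAdef]; exact ⟨δ, hδne, hcone, rfl⟩
        · exfalso
          apply hBne
          have hβne : β ≠ 0 := by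
            rintro rfl
            apply hδne
            simp only [Pi.zero_apply, ne_eq, not_true_eq_false, Finset.filter_false,
              Finset.sum_empty, Finset.filter_true] at hcone
            have hall : ∑ j, |δ j| ≤ 0 := by
              calc ∑ j, |δ j|
                  = ∑ j ∈ Finset.univ.filter (fun j : Fin p => True), |δ j| := by simp
                _ ≤ 0 := by simpa using hcone
            exact l1Norm_eq_zero (le_antisymm hall (l1Norm_nonneg δ))
          have hβ1 : 0 < l1Norm β := by
            rcases (l1Norm_nonneg β).lt_or_eq with h | h
            · exact h
            · exact absurd (l1Norm_eq_zero h.symm) hβne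
          by_cases hPβ : predNorm n p z β = 0
          · -- z_i'β = 0 for all i; use δ' = -β + tδ
            have hδ1 : 0 < l1Norm δ := by
              rcases (l1Norm_nonneg δ).lt_or_eq with h | h
              · exact h
              · exact absurd (l1Norm_eq_zero h.symm) hδne
            have hrow : ∀ i, ∑ j, z i j * β j = 0 := by
              intro i
              have hargz : (n:ℝ)⁻¹ * ∑ i, (∑ j, z i j * β j) ^ 2 = 0 :=
                le_antisymm (Real.sqrt_eq_zero'.mp hPβ) (predNorm_arg_nonneg n p z β)
              have hninv : (n:ℝ)⁻¹ ≠ 0 := by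
                have h0 : (0:ℝ) < n := by exact_mod_cast hn
                positivity
              have hS : ∑ i, (∑ j, z i j * β j) ^ 2 = 0 :=
                (mul_eq_zero.mp hargz).resolve_left hninv
              exact sq_eq_zero_iff.mp ((Finset.sum_eq_zero_iff_of_nonneg
                (fun i _ => sq_nonneg (∑ j, z i j * β j))).mp hS i (Finset.mem_univ i))
            set t : ℝ := l1Norm β / l1Norm δ with htdef
            have ht : 0 < t := div_pos hβ1 hδ1
            set δ' : Fin p → ℝ := fun j => -β j + t * δ j with hδ'def
            have hl1 : l1Norm (β + δ') ≤ l1Norm β := by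
              have hadd : β + δ' = fun j => t * δ j := by
                funext j
                simp only [Pi.add_apply, hδ'def]
                ring
              rw [hadd]
              have hsc : l1Norm (fun j => t * δ j) = t * l1Norm δ := by
                unfold l1Norm
                rw [Finset.mul_sum]
                exact Finset.sum_congr rfl fun j _ => by rw [abs_mul, abs_of_pos ht]
              rw [hsc, htdef, div_mul_cancel₀ _ hδ1.ne']
            have hrow' : ∀ i, ∑ j, z i j * δ' j = t * ∑ j, z i j * δ j := by
              intro i
              have hh : ∑ j, z i j * δ' j
                  = -(∑ j, z i j * β j) + t * ∑ j, z i j * δ j := by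
                rw [← Finset.sum_neg_distrib, Finset.mul_sum, ← Finset.sum_add_distrib]
                exact Finset.sum_congr rfl fun j _ => by
                  simp only [hδ'def]; ring
              rw [hh, hrow i, neg_zero, zero_add]
            have hX : 0 < (n:ℝ)⁻¹ * ∑ i, (∑ j, z i j * δ j) ^ 2 := by
              rcases (predNorm_arg_nonneg n p z δ).lt_or_eq with h | h
              · exact h
              · exact absurd (show predNorm n p z δ = 0 by
                  unfold predNorm; rw [← h, Real.sqrt_zero]) hPδ
            have hpr' : predNorm n p z δ' ≠ 0 := by
              have harg : (n:ℝ)⁻¹ * ∑ i, (∑ j, z i j * δ' j) ^ 2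
                  = t ^ 2 * ((n:ℝ)⁻¹ * ∑ i, (∑ j, z i j * δ j) ^ 2) := by
                simp_rw [hrow', mul_pow]
                rw [← Finset.mul_sum]
                ring
              have hpos : 0 < predNorm n p z δ' := by
                unfold predNorm
                rw [harg]
                exact Real.sqrt_pos.mpr (mul_pos (pow_pos ht 2) hX)
              exact hpos.ne'
            exact ⟨(Finset.univ.sup' ⟨⟨0, hp⟩, Finset.mem_univ _⟩ fun j =>
                |(n : ℝ)⁻¹ * ∑ i, z i j * (∑ k, z i k * δ' k)|) / predNorm n p z δ',
              by rw [hBdef]; exact ⟨δ', hl1, hpr', rfl⟩⟩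
          · -- predNorm β ≠ 0 : use δ' = -β
            have hl1 : l1Norm (β + -β) ≤ l1Norm β := by
              have h0 : β + -β = 0 := by funext j; simp
              rw [h0]
              have hz0 : l1Norm (0 : Fin p → ℝ) = 0 := by simp [l1Norm]
              rw [hz0]
              exact l1Norm_nonneg β
            have hpr' : predNorm n p z (-β) ≠ 0 := by
              have heq : predNorm n p z (-β) = predNorm n p z β := by
                unfold predNorm
                congr 2
                refine Finset.sum_congr rfl fun i _ => ?_
                have hneg : ∑ j, z i j * (-β) j = -(∑ j, z i j * β j) := by
                  rw [← Finset.sum_neg_distrib]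
                  exact Finset.sum_congr rfl fun j _ => by simp
                rw [hneg, neg_sq]
              rw [heq]
              exact hPβ
            exact ⟨(Finset.univ.sup' ⟨⟨0, hp⟩, Finset.mem_univ _⟩ fun j =>
                |(n : ℝ)⁻¹ * ∑ i, z i j * (∑ k, z i k * (-β) k)|) / predNorm n p z (-β),
              by rw [hBdef]; exact ⟨-β, hl1, hpr', rfl⟩⟩
    have hc : 0 ≤ 2⁻¹ * (Real.sqrt (s:ℝ))⁻¹ := by positivity
    nlinarith
end

section
/- Stepdown procedure family-wise error reduction: suppose critical values c_{1−α,w} for nonempty subsets w ⊆ {1,…,p} satisfy the monotonicity c_{1−α,w'} ≤ c_{1−α,w''} whenever w' ⊆ w''. If w is the set of true null hypotheses and the stepdown procedure rejects at least one true null hypothesis, then max_{j∈w} t_j > c_{1−α,w}. Consequently, the probability of rejecting at least one true null is at most Pr(max_{j∈w} t_j > c_{1−α,w}). -/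
open MeasureTheory

/-- The sets of non-rejected hypotheses along the stepdown procedure of
Romano–Wolf: `w(1) = {1,…,p}`, and `w(l+1)` consists of the hypotheses in `w(l)`
that are not rejected at step `l` (i.e. those with `t_j ≤ c_{1−α, w(l)}`). -/
noncomputable def stepdownSets {p : ℕ} (t : Fin p → ℝ) (c : Finset (Fin p) → ℝ) :
    ℕ → Finset (Fin p)
  | 0 => Finset.univ
  | l + 1 => (stepdownSets t c l).filter fun j => t j ≤ c (stepdownSets t c l)

lemma stepdown_notmem {p : ℕ} (t : Fin p → ℝ) (c : Finset (Fin p) → ℝ) (k : Fin p) :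
    ∀ l, k ∉ stepdownSets t c l →
      ∃ l' < l, k ∈ stepdownSets t c l' ∧ c (stepdownSets t c l') < t k := by
  intro l
  induction l with
  | zero => intro h; exact absurd (Finset.mem_univ k) h
  | succ l ih =>
    intro h
    by_cases hk : k ∈ stepdownSets t c l
    · refine ⟨l, Nat.lt_succ_self l, hk, ?_⟩
      by_contra hle
      exact h (Finset.mem_filter.2 ⟨hk, le_of_not_gt hle⟩)
    · obtain ⟨l', hl', h1, h2⟩ := ih hk
      exact ⟨l', hl'.trans (Nat.lt_succ_self l), h1, h2⟩

lemma stepdown_key {p : ℕ} (t : Fin p → ℝ) (c : Finset (Fin p) → ℝ)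
    (hc : ∀ w' w'' : Finset (Fin p), w'.Nonempty → w' ⊆ w'' → c w' ≤ c w'')
    (w : Finset (Fin p)) (hw : w.Nonempty) :
    ∀ l, (∃ j, j ∈ w ∧ j ∈ stepdownSets t c l ∧ c (stepdownSets t c l) < t j) →
      c w < w.sup' hw t := by
  intro l
  induction l using Nat.strong_induction_on with
  | _ l ih =>
    rintro ⟨j, hjw, hjl, hjt⟩
    by_cases hsub : w ⊆ stepdownSets t c l
    · calc c w ≤ c (stepdownSets t c l) := hc w _ hw hsub
        _ < t j := hjt
        _ ≤ w.sup' hw t := Finset.le_sup' t hjw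
    · obtain ⟨k, hkw, hkl⟩ := Finset.not_subset.1 hsub
      obtain ⟨l', hl', h1, h2⟩ := stepdown_notmem t c k l hkl
      exact ih l' hl' ⟨k, hkw, h1, h2⟩

/-- Stepdown family-wise error reduction: if the critical values are
monotone (`c_{1−α,w'} ≤ c_{1−α,w''}` whenever `w' ⊆ w''`, `w'` nonempty) and the
stepdown procedure rejects at least one true null hypothesis (some `j` in the true
null set `w` with `j ∈ w(l)` and `t_j > c_{1−α,w(l)}` at some step `l`), then
`max_{j∈w} t_j > c_{1−α,w}`; consequently the probability of rejecting at least
one true null is at most `Pr(max_{j∈w} t_j > c_{1−α,w})`. -/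
theorem stepdown_fwer_reduction {Ω : Type*} [MeasurableSpace Ω]
    (μ : Measure Ω) [IsProbabilityMeasure μ] (p : ℕ)
    (t : Ω → Fin p → ℝ) (c : Ω → Finset (Fin p) → ℝ)
    (hc : ∀ (ω : Ω) (w' w'' : Finset (Fin p)), w'.Nonempty → w' ⊆ w'' →
      c ω w' ≤ c ω w'')
    (w : Finset (Fin p)) (hw : w.Nonempty) :
    (∀ ω : Ω,
      (∃ (l : ℕ) (j : Fin p), j ∈ w ∧ j ∈ stepdownSets (t ω) (c ω) l ∧
        c ω (stepdownSets (t ω) (c ω) l) < t ω j) →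
      c ω w < w.sup' hw (t ω)) ∧
    μ {ω | ∃ (l : ℕ) (j : Fin p), j ∈ w ∧ j ∈ stepdownSets (t ω) (c ω) l ∧
        c ω (stepdownSets (t ω) (c ω) l) < t ω j} ≤
      μ {ω | c ω w < w.sup' hw (t ω)} := by
  have main : ∀ ω : Ω,
      (∃ (l : ℕ) (j : Fin p), j ∈ w ∧ j ∈ stepdownSets (t ω) (c ω) l ∧
        c ω (stepdownSets (t ω) (c ω) l) < t ω j) →
      c ω w < w.sup' hw (t ω) := by
    rintro ω ⟨l, j, hjw, hjl, hjt⟩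
    exact stepdown_key (t ω) (c ω) (hc ω) w hw l ⟨j, hjw, hjl, hjt⟩
  refine ⟨main, measure_mono ?_⟩
  intro ω hω
  exact main ω hω
end
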